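/- Define u(t,V,β) = −exp(−γ(e^{r(T−t)}V + a(t) + (1/2)(β−r·1⃗)ᵀB(t)(β−r·1⃗))) where a(t) = (1/(2γ))∫_t^T Tr(Σ⁻¹(Γ_s − Γ_T)) ds and B(t) = (1/γ)(Γ_t⁻¹ − Γ_t⁻¹Γ_TΓ_t⁻¹). Then u satisfies, on [0,T]×ℝ×ℝ^d, the HJB equation −∂_t u − (1/2)Tr(Γ_tΣ⁻¹Γ_t ∂²_{ββ}u) − sup_{M∈ℝ^d}{(Mᵀ(β−r·1⃗) + rV)∂_V u + (1/2)MᵀΣM ∂²_{VV}u + MᵀΓ_t ∂²_{Vβ}u} = 0 with terminal condition u(T,V,β) = −exp(−γV), and the supremum is attained at M* = e^{−r(T−t)}(1/γ)Σ⁻¹Γ_TΓ_t⁻¹(β−r·1⃗). -/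

import Mathlib

noncomputable section

open Set Matrix

/-- ∂ₜ for a function u(t,V,β). -/
def umt {d : ℕ} (u : ℝ → ℝ → (Fin d → ℝ) → ℝ) (t V : ℝ) (β : Fin d → ℝ) : ℝ :=
  deriv (fun s => u s V β) t
/-- ∂_V for a function u(t,V,β). -/
def umV {d : ℕ} (u : ℝ → ℝ → (Fin d → ℝ) → ℝ) (t V : ℝ) (β : Fin d → ℝ) : ℝ :=
  deriv (fun x => u t x β) V
/-- ∂²_{VV} for a function u(t,V,β). -/
def umVV {d : ℕ} (u : ℝ → ℝ → (Fin d → ℝ) → ℝ) (t V : ℝ) (β : Fin d → ℝ) : ℝ :=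
  deriv (fun x => umV u t x β) V
/-- Gradient in β of a function u(t,V,β). -/
def umgrad {d : ℕ} (u : ℝ → ℝ → (Fin d → ℝ) → ℝ) (t V : ℝ) (β : Fin d → ℝ) : Fin d → ℝ :=
  fun i => deriv (fun y => u t V (Function.update β i y)) (β i)
/-- Hessian in β of a function u(t,V,β). -/
def umhess {d : ℕ} (u : ℝ → ℝ → (Fin d → ℝ) → ℝ) (t V : ℝ) (β : Fin d → ℝ) :
    Matrix (Fin d) (Fin d) ℝ :=
  Matrix.of fun i j => deriv (fun y => umgrad u t V (Function.update β j y) i) (β j)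
/-- Mixed derivative ∂²_{Vβ} (an ℝ^d-valued quantity) of u(t,V,β). -/
def umVb {d : ℕ} (u : ℝ → ℝ → (Fin d → ℝ) → ℝ) (t V : ℝ) (β : Fin d → ℝ) : Fin d → ℝ :=
  fun i => deriv (fun y => umV u t V (Function.update β i y)) (β i)

/-- The vector β − r·1⃗. -/
def rsub {d : ℕ} (r : ℝ) (β : Fin d → ℝ) : Fin d → ℝ := fun i => β i - r

/-- The quantity inside the supremum of the multi-asset CARA HJB equation. -/
def hamMd {d : ℕ} (Sm Gt : Matrix (Fin d) (Fin d) ℝ) (r : ℝ)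
    (u : ℝ → ℝ → (Fin d → ℝ) → ℝ) (t V : ℝ) (β : Fin d → ℝ) (M : Fin d → ℝ) : ℝ :=
  (M ⬝ᵥ rsub r β + r * V) * umV u t V β
    + (1/2) * (M ⬝ᵥ Sm.mulVec M) * umVV u t V β
    + M ⬝ᵥ Gt.mulVec (umVb u t V β)

/- ### Auxiliary lemmas -/

lemma update_eq_add {d : ℕ} (v : Fin d → ℝ) (i : Fin d) (x : ℝ) :
    Function.update v i x = v + (x - v i) • (Pi.single i 1 : Fin d → ℝ) := by
  funext j
  by_cases h : j = i
  · subst h; simp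
  · simp [Function.update_of_ne h, Pi.single_apply, h]

lemma symm_dot {d : ℕ} (C : Matrix (Fin d) (Fin d) ℝ) (hC : Cᵀ = C) (v w : Fin d → ℝ) :
    (C *ᵥ v) ⬝ᵥ w = v ⬝ᵥ (C *ᵥ w) := by
  rw [dotProduct_comm, dotProduct_mulVec, ← mulVec_transpose, hC, dotProduct_comm]

lemma trace_mul_vecMulVec {d : ℕ} (A : Matrix (Fin d) (Fin d) ℝ) (v w : Fin d → ℝ) :
    Matrix.trace (A * vecMulVec v w) = w ⬝ᵥ (A *ᵥ v) := by
  simp only [Matrix.trace, Matrix.diag, Matrix.mul_apply, vecMulVec_apply, dotProduct, mulVec,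
    dotProduct, Finset.mul_sum]
  exact Finset.sum_congr rfl fun i _ => Finset.sum_congr rfl fun x _ => by ring

lemma single_dot {d : ℕ} (i : Fin d) (w : Fin d → ℝ) :
    (Pi.single i 1 : Fin d → ℝ) ⬝ᵥ w = w i := by simp

lemma mulVec_single' {d : ℕ} (Bm : Matrix (Fin d) (Fin d) ℝ) (i j : Fin d) :
    (Bm *ᵥ (Pi.single j 1 : Fin d → ℝ)) i = Bm i j := by
  simp [mulVec_single]

lemma update_mulVec {d : ℕ} (Bm : Matrix (Fin d) (Fin d) ℝ) (v : Fin d → ℝ) (i j : Fin d)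
    (x : ℝ) :
    (Bm *ᵥ Function.update v j x) i = (Bm *ᵥ v) i + (x - v j) * Bm i j := by
  rw [update_eq_add, mulVec_add, mulVec_smul]
  simp [mulVec_single', mul_comm]

lemma update_quad {d : ℕ} (Bm : Matrix (Fin d) (Fin d) ℝ) (hB : Bmᵀ = Bm) (v : Fin d → ℝ)
    (i : Fin d) (x : ℝ) :
    Function.update v i x ⬝ᵥ Bm *ᵥ Function.update v i x
      = v ⬝ᵥ Bm *ᵥ v + 2*(x - v i)*((Bm *ᵥ v) i) + (x - v i)^2 * Bm i i := by
  have h2 : v ⬝ᵥ (Bm *ᵥ (Pi.single i 1 : Fin d → ℝ)) = (Bm *ᵥ v) i := by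
    rw [← symm_dot Bm hB]; simp
  rw [update_eq_add, mulVec_add, mulVec_smul, add_dotProduct, smul_dotProduct,
    dotProduct_add, dotProduct_add, dotProduct_smul, dotProduct_smul, single_dot,
    h2, single_dot, mulVec_single']
  simp only [smul_eq_mul]
  ring

lemma rsub_update {d : ℕ} (r : ℝ) (β : Fin d → ℝ) (i : Fin d) (y : ℝ) :
    rsub r (Function.update β i y) = Function.update (rsub r β) i (y - r) := by
  funext j
  by_cases h : j = i
  · subst h; simp [rsub]
  · simp [rsub, Function.update_of_ne h]

/-- V-direction: derivative of x ↦ c·exp(-γ(Ex + C)). -/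
lemma keyV (c γ E C x0 : ℝ) :
    HasDerivAt (fun x => c * Real.exp (-γ*(E*x + C)))
      (c * Real.exp (-γ*(E*x0 + C)) * (-γ*E)) x0 := by
  have h1 : HasDerivAt (fun x : ℝ => E*x + C) E x0 := by
    simpa using ((hasDerivAt_id x0).const_mul E).add_const C
  have h2 := ((h1.const_mul (-γ)).exp).const_mul c
  refine h2.congr_deriv ?_
  ring

/-- β-direction, no affine factor. -/
lemma key1' (c1 γ c0 Q m bii z : ℝ) :
    HasDerivAt (fun y => c1 * Real.exp (-γ*(c0 + (1/2)*(Q + 2*(y-z)*m + (y-z)^2*bii))))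
      (c1 * Real.exp (-γ*(c0 + (1/2)*Q)) * (-γ*m)) z := by
  have hy : HasDerivAt (fun y : ℝ => y - z) 1 z := (hasDerivAt_id z).sub_const z
  have hA : HasDerivAt (fun y : ℝ => 2*(y-z)*m) (2*m) z := by
    simpa using ((hy.const_mul 2).mul_const m)
  have hB2 : HasDerivAt (fun y : ℝ => (y-z)^2*bii) 0 z := by
    simpa using ((hy.pow 2).mul_const bii)
  have h1 : HasDerivAt (fun y : ℝ => Q + 2*(y-z)*m + (y-z)^2*bii) (2*m) z := by
    simpa using ((hA.const_add Q).fun_add hB2)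
  have h2 := ((((h1.const_mul (1/2:ℝ)).const_add c0).const_mul (-γ)).exp).const_mul c1
  refine h2.congr_deriv ?_
  simp only [sub_self, mul_zero, zero_mul, add_zero, ne_eq, OfNat.ofNat_ne_zero,
    not_false_eq_true, zero_pow]
  ring

/-- β-direction, with affine factor. -/
lemma key1 (c1 γ c0 Q m bii n bij z : ℝ) :
    HasDerivAt (fun y => c1 * Real.exp (-γ*(c0 + (1/2)*(Q + 2*(y-z)*m + (y-z)^2*bii)))
        * (n + (y-z)*bij))
      (c1 * Real.exp (-γ*(c0 + (1/2)*Q)) * (bij - γ*m*n)) z := by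
  have hy : HasDerivAt (fun y : ℝ => y - z) 1 z := (hasDerivAt_id z).sub_const z
  have h1 := key1' c1 γ c0 Q m bii z
  have h2 : HasDerivAt (fun y : ℝ => n + (y-z)*bij) bij z := by
    simpa using (hy.mul_const bij).const_add n
  have h3 := h1.fun_mul h2
  refine h3.congr_deriv ?_
  simp
  ring

set_option maxHeartbeats 2000000 in
theorem stmt15
    (T r γ : ℝ) (hT : 0 < T) (hγ : 0 < γ)
    (d : ℕ) (hd : 1 ≤ d)
    (Sm G0 : Matrix (Fin d) (Fin d) ℝ) (hSm : Sm.PosDef) (hG0 : G0.PosDef)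
    (Γ : ℝ → Matrix (Fin d) (Fin d) ℝ)
    (hΓ : ∀ t, Γ t = (G0⁻¹ + t • Sm⁻¹)⁻¹)
    (a : ℝ → ℝ) (B : ℝ → Matrix (Fin d) (Fin d) ℝ)
    (ha : ∀ t, a t = (1/(2*γ)) * ∫ s in t..T, Matrix.trace (Sm⁻¹ * (Γ s - Γ T)))
    (hB : ∀ t, B t = (1/γ) • ((Γ t)⁻¹ - (Γ t)⁻¹ * Γ T * (Γ t)⁻¹))
    (u : ℝ → ℝ → (Fin d → ℝ) → ℝ)
    (hu : ∀ (t V : ℝ) (β : Fin d → ℝ),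
      u t V β = -Real.exp (-γ * (Real.exp (r*(T-t)) * V + a t
        + (1/2) * (rsub r β ⬝ᵥ (B t).mulVec (rsub r β))))) :
    (∀ t ∈ Icc (0:ℝ) T, ∀ (V : ℝ) (β : Fin d → ℝ),
      -- the supremum in the HJB equation is attained at M*
      IsGreatest (Set.range (hamMd Sm (Γ t) r u t V β))
        (hamMd Sm (Γ t) r u t V β
          (Real.exp (-(r*(T-t)))
            • ((1/γ) • (Sm⁻¹ * Γ T * (Γ t)⁻¹).mulVec (rsub r β))))
      ∧
      -- the HJB equation holds
      -umt u t V β - (1/2) * Matrix.trace (Γ t * Sm⁻¹ * Γ t * umhess u t V β)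
        - hamMd Sm (Γ t) r u t V β
            (Real.exp (-(r*(T-t)))
              • ((1/γ) • (Sm⁻¹ * Γ T * (Γ t)⁻¹).mulVec (rsub r β))) = 0)
    ∧
    -- terminal condition for u
    (∀ (V : ℝ) (β : Fin d → ℝ), u T V β = -Real.exp (-γ * V)) := by
  have hγ0 : γ ≠ 0 := ne_of_gt hγ
  have hSmT : Smᵀ = Sm := hSm.1
  have hSi : (Sm⁻¹).PosDef := hSm.inv
  have hG0i : (G0⁻¹).PosDef := hG0.inv
  have hSiT : (Sm⁻¹)ᵀ = Sm⁻¹ := hSi.1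
  have hG0iT : (G0⁻¹)ᵀ = G0⁻¹ := hG0i.1
  set P : ℝ → Matrix (Fin d) (Fin d) ℝ := fun s => G0⁻¹ + s • Sm⁻¹ with hPdef
  have hPT : ∀ s, (P s)ᵀ = P s := by
    intro s
    show (G0⁻¹ + s • Sm⁻¹)ᵀ = G0⁻¹ + s • Sm⁻¹
    rw [transpose_add, transpose_smul, hSiT, hG0iT]
  have hPpos : ∀ s, 0 ≤ s → (P s).PosDef := by
    intro s hs
    refine hG0i.add_posSemidef (PosSemidef.of_dotProduct_mulVec_nonneg ?_ ?_)
    · show _ = _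
      rw [conjTranspose_smul, star_trivial, hSi.1.eq]
    · intro x
      have h0 := hSi.posSemidef.dotProduct_mulVec_nonneg x
      rw [smul_mulVec, dotProduct_smul, smul_eq_mul]
      exact mul_nonneg hs h0
  have hdetP : ∀ s, 0 ≤ s → IsUnit (P s).det :=
    fun s hs => isUnit_iff_ne_zero.2 (hPpos s hs).det_pos.ne'
  set S : Set ℝ := {s | IsUnit (P s).det} with hSdef
  have hsubS : Icc (0:ℝ) T ⊆ S := fun s hs => hdetP s hs.1
  have hPc : Continuous P := by
    apply continuous_pi; intro i; apply continuous_pi; intro j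
    show Continuous fun s => (G0⁻¹ + s • Sm⁻¹) i j
    simp only [Matrix.add_apply, Matrix.smul_apply, smul_eq_mul]
    exact continuous_const.add (continuous_id.mul continuous_const)
  have hSopen : IsOpen S := by
    have hEq : S = (fun s => (P s).det) ⁻¹' {x : ℝ | x ≠ 0} := by
      ext s; simp [hSdef, isUnit_iff_ne_zero]
    rw [hEq]
    exact (isOpen_ne_fun continuous_id continuous_const).preimage hPc.matrix_det
  have hΓP : ∀ s, Γ s = (P s)⁻¹ := fun s => hΓ s
  have hΓtr : ∀ s, (Γ s)ᵀ = Γ s := by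
    intro s; rw [hΓP s, transpose_nonsing_inv, hPT]
  have hΓinv : ∀ s ∈ S, (Γ s)⁻¹ = P s := fun s hs => by
    rw [hΓP s]; exact nonsing_inv_nonsing_inv _ hs
  have hΓmulP : ∀ s ∈ S, Γ s * P s = 1 := fun s hs => by
    rw [hΓP s]; exact nonsing_inv_mul _ hs
  have hPmulΓ : ∀ s ∈ S, P s * Γ s = 1 := fun s hs => by
    rw [hΓP s]; exact mul_nonsing_inv _ hs
  have hBeq : ∀ s ∈ S, B s = γ⁻¹ • (P s - P s * Γ T * P s) := by
    intro s hs; rw [hB s, hΓinv s hs, one_div]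
  have hBtr : ∀ s ∈ S, (B s)ᵀ = B s := by
    intro s hs
    rw [hBeq s hs, transpose_smul, transpose_sub, transpose_mul, transpose_mul, hPT, hΓtr,
      Matrix.mul_assoc]
  have hΓeq' : ∀ s, Γ s = (P s).det⁻¹ • (P s).adjugate := by
    intro s; rw [hΓP s, Matrix.inv_def, Ring.inverse_eq_inv]
  have hΓc : ContinuousOn Γ S := by
    have h1 : ContinuousOn (fun s => (P s).det⁻¹ • (P s).adjugate) S :=
      (hPc.matrix_det.continuousOn.inv₀ fun s hs => isUnit_iff_ne_zero.1 hs).smul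
        hPc.matrix_adjugate.continuousOn
    exact h1.congr fun s _ => hΓeq' s
  have hgc : ContinuousOn (fun s => Matrix.trace (Sm⁻¹ * (Γ s - Γ T))) S := by
    have hc : Continuous (fun A : Matrix (Fin d) (Fin d) ℝ => Matrix.trace (Sm⁻¹ * (A - Γ T))) :=
      (continuous_const.matrix_mul (continuous_id.sub continuous_const)).matrix_trace
    exact hc.comp_continuousOn hΓc
  refine ⟨fun t ht V β => ?_, fun V β => ?_⟩
  · -- main part
    obtain ⟨ht0, htT⟩ := ht
    have htS : t ∈ S := hsubS ⟨ht0, htT⟩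
    have hTS : T ∈ S := hsubS ⟨hT.le, le_rfl⟩
    set q : Fin d → ℝ := rsub r β with hq
    set E : ℝ := Real.exp (r*(T-t)) with hEdef
    have hEpos : 0 < E := Real.exp_pos _
    have hE0 : E ≠ 0 := hEpos.ne'
    set Kc : ℝ := Real.exp (-γ*(E*V + a t + (1/2)*(q ⬝ᵥ (B t) *ᵥ q))) with hKc
    have hKpos : 0 < Kc := Real.exp_pos _
    have hBtT : (B t)ᵀ = B t := hBtr t htS
    set v1 : Fin d → ℝ := Sm⁻¹ *ᵥ q with hv1
    set pq : Fin d → ℝ := P t *ᵥ q with hpq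
    set w : Fin d → ℝ := Γ T *ᵥ pq with hw
    set mw : Fin d → ℝ := Sm⁻¹ *ᵥ w with hmw
    set bq : Fin d → ℝ := (B t) *ᵥ q with hbq
    set α1 : ℝ := q ⬝ᵥ v1 with hα1
    set α2 : ℝ := v1 ⬝ᵥ w with hα2
    set α3 : ℝ := w ⬝ᵥ mw with hα3
    -- derivative in V
    have humV : ∀ (x : ℝ) (β' : Fin d → ℝ),
        umV u t x β' = γ*E*Real.exp (-γ*(E*x + a t
          + (1/2)*(rsub r β' ⬝ᵥ (B t) *ᵥ rsub r β'))) := by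
      intro x β'
      have hfn : (fun y => u t y β') = fun y =>
          (-1:ℝ) * Real.exp (-γ*(E*y + (a t + (1/2)*(rsub r β' ⬝ᵥ (B t) *ᵥ rsub r β')))) := by
        funext y
        rw [hu t y β', neg_one_mul]
        congr 2
        ring
      unfold umV
      rw [hfn, (keyV (-1 : ℝ) γ E (a t + (1/2)*(rsub r β' ⬝ᵥ (B t) *ᵥ rsub r β')) x).deriv,
        show -γ*(E*x + (a t + (1/2)*(rsub r β' ⬝ᵥ (B t) *ᵥ rsub r β')))
          = -γ*(E*x + a t + (1/2)*(rsub r β' ⬝ᵥ (B t) *ᵥ rsub r β')) from by ring]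
      ring
    have humVval : umV u t V β = γ*E*Kc := by
      rw [humV V β, ← hq, ← hKc]
    have humVV : umVV u t V β = -(γ^2*E^2*Kc) := by
      unfold umVV
      have hfn : (fun x => umV u t x β) = fun x =>
          (γ*E) * Real.exp (-γ*(E*x + (a t + (1/2)*(q ⬝ᵥ (B t) *ᵥ q)))) := by
        funext x
        rw [humV x β, ← hq]
        congr 2
        ring
      rw [hfn, (keyV (γ*E) γ E (a t + (1/2)*(q ⬝ᵥ (B t) *ᵥ q)) V).deriv,
        show -γ*(E*V + (a t + (1/2)*(q ⬝ᵥ (B t) *ᵥ q)))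
          = -γ*(E*V + a t + (1/2)*(q ⬝ᵥ (B t) *ᵥ q)) from by ring, ← hKc]
      ring
    -- mixed V-β derivative
    have humVb : umVb u t V β = (-(γ^2*E*Kc)) • bq := by
      funext i
      show deriv (fun y => umV u t V (Function.update β i y)) (β i) = _
      have hfn : (fun y => umV u t V (Function.update β i y)) = fun y =>
          (γ*E) * Real.exp (-γ*((E*V + a t) + (1/2)*(q ⬝ᵥ (B t) *ᵥ q
            + 2*(y - β i)*((B t *ᵥ q) i) + (y - β i)^2 * (B t) i i))) := by
        funext y
        rw [humV V (Function.update β i y), rsub_update, ← hq,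
          update_quad (B t) hBtT q i (y - r)]
        congr 2
        simp only [hq, rsub]
        ring
      rw [hfn, (key1' (γ*E) γ (E*V + a t) (q ⬝ᵥ (B t) *ᵥ q) ((B t *ᵥ q) i)
        ((B t) i i) (β i)).deriv,
        show -γ*((E*V + a t) + (1/2)*(q ⬝ᵥ (B t) *ᵥ q))
          = -γ*(E*V + a t + (1/2)*(q ⬝ᵥ (B t) *ᵥ q)) from by ring, ← hKc]
      simp only [Pi.smul_apply, smul_eq_mul, hbq]
      ring
    -- gradient in β
    have humgrad : ∀ (β' : Fin d → ℝ) (i : Fin d), umgrad u t V β' i =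
        γ * Real.exp (-γ*((E*V + a t) + (1/2)*(rsub r β' ⬝ᵥ (B t) *ᵥ rsub r β')))
          * ((B t *ᵥ rsub r β') i) := by
      intro β' i
      show deriv (fun y => u t V (Function.update β' i y)) (β' i) = _
      have hfn : (fun y => u t V (Function.update β' i y)) = fun y =>
          (-1:ℝ) * Real.exp (-γ*((E*V + a t) + (1/2)*(rsub r β' ⬝ᵥ (B t) *ᵥ rsub r β'
            + 2*(y - β' i)*((B t *ᵥ rsub r β') i) + (y - β' i)^2 * (B t) i i))) := by
        funext y
        rw [hu t V (Function.update β' i y), rsub_update,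
          update_quad (B t) hBtT (rsub r β') i (y - r), neg_one_mul]
        congr 2
        simp only [rsub]
        ring
      rw [hfn, (key1' (-1) γ (E*V + a t) (rsub r β' ⬝ᵥ (B t) *ᵥ rsub r β')
        ((B t *ᵥ rsub r β') i) ((B t) i i) (β' i)).deriv]
      ring
    -- Hessian in β
    have humhess : umhess u t V β = Kc • (γ • (B t) - (γ^2 : ℝ) • vecMulVec bq bq) := by
      ext i j
      show deriv (fun y => umgrad u t V (Function.update β j y) i) (β j) = _
      have hfn : (fun y => umgrad u t V (Function.update β j y) i) = fun y =>
          γ * Real.exp (-γ*((E*V + a t) + (1/2)*(q ⬝ᵥ (B t) *ᵥ q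
            + 2*(y - β j)*((B t *ᵥ q) j) + (y - β j)^2 * (B t) j j)))
          * ((B t *ᵥ q) i + (y - β j)*((B t) i j)) := by
        funext y
        rw [humgrad (Function.update β j y) i, rsub_update, ← hq,
          update_quad (B t) hBtT q j (y - r), update_mulVec (B t) q i j (y - r)]
        have hqj : q j = β j - r := by simp [hq, rsub]
        rw [hqj]
        congr 2
        · ring
        · ring
      rw [hfn, (key1 γ γ (E*V + a t) (q ⬝ᵥ (B t) *ᵥ q) ((B t *ᵥ q) j) ((B t) j j)
        ((B t *ᵥ q) i) ((B t) i j) (β j)).deriv,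
        show -γ*((E*V + a t) + (1/2)*(q ⬝ᵥ (B t) *ᵥ q))
          = -γ*(E*V + a t + (1/2)*(q ⬝ᵥ (B t) *ᵥ q)) from by ring, ← hKc]
      simp only [Matrix.smul_apply, Matrix.sub_apply, vecMulVec_apply, smul_eq_mul, hbq]
      ring
    -- matrix identities
    have hΓBt : γ • (Γ t * B t) = 1 - Γ T * P t := by
      rw [hBeq t htS, Matrix.mul_smul, smul_smul, mul_inv_cancel₀ hγ0, one_smul,
        Matrix.mul_sub, ← Matrix.mul_assoc, ← Matrix.mul_assoc, hΓmulP t htS,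
        Matrix.one_mul]
    have hΓbq : Γ t *ᵥ bq = γ⁻¹ • (q - w) := by
      have h1 : γ • (Γ t *ᵥ bq) = q - w := by
        rw [hbq, mulVec_mulVec, ← smul_mulVec, hΓBt, sub_mulVec, one_mulVec,
          hw, hpq, mulVec_mulVec]
      rw [← h1, smul_smul, inv_mul_cancel₀ hγ0, one_smul]
    -- the Hamiltonian in convenient form
    have hamval : ∀ M : Fin d → ℝ, hamMd Sm (Γ t) r u t V β M
        = γ*E*Kc*(r*V) + γ*E*Kc*(M ⬝ᵥ w) - (1/2)*γ^2*E^2*Kc*(M ⬝ᵥ Sm *ᵥ M) := by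
      intro M
      unfold hamMd
      rw [humVval, humVV, humVb, mulVec_smul, dotProduct_smul, hΓbq, dotProduct_smul,
        dotProduct_sub, ← hq]
      simp only [smul_eq_mul]
      field_simp
      ring
    -- the maximizer
    set Ms : Fin d → ℝ := Real.exp (-(r*(T-t)))
      • ((1/γ) • (Sm⁻¹ * Γ T * (Γ t)⁻¹).mulVec q) with hMs
    have hMs2 : Ms = (E⁻¹ * γ⁻¹) • mw := by
      rw [hMs, hΓinv t htS, smul_smul]
      congr 1
      · rw [Real.exp_neg, one_div, hEdef]
      · rw [hmw, hw, hpq, ← mulVec_mulVec, ← mulVec_mulVec]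
    have hSmMs : Sm *ᵥ Ms = (E⁻¹*γ⁻¹) • w := by
      rw [hMs2, mulVec_smul, hmw, mulVec_mulVec, mul_nonsing_inv Sm
        (isUnit_iff_ne_zero.2 hSm.det_pos.ne'), one_mulVec]
    have hMsw : Ms ⬝ᵥ w = E⁻¹*γ⁻¹*α3 := by
      rw [hMs2, smul_dotProduct, smul_eq_mul, hα3, dotProduct_comm]
    have hMSM : ∀ M : Fin d → ℝ, M ⬝ᵥ Sm *ᵥ Ms = E⁻¹*γ⁻¹*(M ⬝ᵥ w) := by
      intro M; rw [hSmMs, dotProduct_smul, smul_eq_mul]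
    have hMsSM : ∀ M : Fin d → ℝ, Ms ⬝ᵥ Sm *ᵥ M = E⁻¹*γ⁻¹*(M ⬝ᵥ w) := by
      intro M
      rw [← symm_dot Sm hSmT, hSmMs, smul_dotProduct, smul_eq_mul, dotProduct_comm]
    have hMsSMs : Ms ⬝ᵥ Sm *ᵥ Ms = E⁻¹*γ⁻¹*(E⁻¹*γ⁻¹*α3) := by
      rw [hMSM Ms, hMsw]
    constructor
    · -- IsGreatest
      constructor
      · exact ⟨Ms, rfl⟩
      · rintro x ⟨M, rfl⟩
        have hquad : 0 ≤ (M - Ms) ⬝ᵥ Sm *ᵥ (M - Ms) := by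
          have := hSm.posSemidef.dotProduct_mulVec_nonneg (M - Ms); rwa [star_trivial] at this
        have hexp : (M - Ms) ⬝ᵥ Sm *ᵥ (M - Ms)
            = M ⬝ᵥ Sm *ᵥ M - 2*(E⁻¹*γ⁻¹*(M ⬝ᵥ w)) + E⁻¹*γ⁻¹*(E⁻¹*γ⁻¹*α3) := by
          rw [sub_dotProduct, mulVec_sub, dotProduct_sub, dotProduct_sub, hMSM M,
            hMsSM M, hMsSMs]
          ring
        have hkey : hamMd Sm (Γ t) r u t V β Ms - hamMd Sm (Γ t) r u t V β M
            = (1/2)*γ^2*E^2*Kc*((M - Ms) ⬝ᵥ Sm *ᵥ (M - Ms)) := by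
          rw [hamval M, hamval Ms, hMsw, hMsSMs, hexp]
          field_simp
          ring
        have hpos : 0 ≤ (1/2)*γ^2*E^2*Kc*((M - Ms) ⬝ᵥ Sm *ᵥ (M - Ms)) := by
          have h1 : (0:ℝ) ≤ (1/2)*γ^2*E^2*Kc := by positivity
          exact mul_nonneg h1 hquad
        linarith
    · -- the HJB equation
      -- derivative of a
      set gt : ℝ := Matrix.trace (Sm⁻¹ * (Γ t - Γ T)) with hgt
      have haD : HasDerivAt a (-((1/(2*γ)) * gt)) t := by
        have hfun : a = fun x => (1/(2*γ))
            * (-(∫ s in T..x, Matrix.trace (Sm⁻¹ * (Γ s - Γ T)))) := by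
          funext x
          rw [ha x, intervalIntegral.integral_symm]
        rw [hfun]
        have hsub2 : uIcc T t ⊆ S := by
          rw [Set.uIcc_comm, Set.uIcc_of_le htT]
          exact fun s hs => hsubS ⟨le_trans ht0 hs.1, hs.2⟩
        have hint : IntervalIntegrable (fun s => Matrix.trace (Sm⁻¹ * (Γ s - Γ T)))
            MeasureTheory.volume T t := (hgc.mono hsub2).intervalIntegrable
        have hmeas : StronglyMeasurableAtFilter (fun s => Matrix.trace (Sm⁻¹ * (Γ s - Γ T)))
            (nhds t) MeasureTheory.volume :=
          ContinuousOn.stronglyMeasurableAtFilter hSopen hgc t htS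
        have hcont : ContinuousAt (fun s => Matrix.trace (Sm⁻¹ * (Γ s - Γ T))) t :=
          hgc.continuousAt (hSopen.mem_nhds htS)
        have hD := ((intervalIntegral.integral_hasDerivAt_right hint hmeas hcont).neg).const_mul
          (1/(2*γ))
        refine hD.congr_deriv ?_
        rw [hgt]
        ring
      -- derivative of the quadratic form s ↦ q ⬝ᵥ B s *ᵥ q
      set v0 : Fin d → ℝ := G0⁻¹ *ᵥ q with hv0
      set w0 : Fin d → ℝ := Γ T *ᵥ v0 with hw0
      set w1 : Fin d → ℝ := Γ T *ᵥ v1 with hw1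
      set c0q : ℝ := q ⬝ᵥ v0 with hc0q
      set d00 : ℝ := v0 ⬝ᵥ w0 with hd00
      set d01 : ℝ := v0 ⬝ᵥ w1 with hd01
      set d10 : ℝ := v1 ⬝ᵥ w0 with hd10
      set d11 : ℝ := v1 ⬝ᵥ w1 with hd11
      have hPsq : ∀ s : ℝ, P s *ᵥ q = v0 + s • v1 := by
        intro s
        show (G0⁻¹ + s • Sm⁻¹) *ᵥ q = v0 + s • v1
        rw [add_mulVec, smul_mulVec, hv0, hv1]
      have hFs : ∀ s ∈ S, q ⬝ᵥ (B s) *ᵥ q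
          = γ⁻¹*(c0q + s*α1 - (d00 + s*d01 + s*d10 + s*s*d11)) := by
        intro s hs
        rw [hBeq s hs, smul_mulVec, dotProduct_smul, smul_eq_mul]
        congr 1
        rw [sub_mulVec, dotProduct_sub, ← Matrix.mulVec_mulVec, ← Matrix.mulVec_mulVec,
          ← symm_dot (P s) (hPT s) q (Γ T *ᵥ (P s *ᵥ q)), hPsq s, mulVec_add, mulVec_smul]
        simp only [add_dotProduct, dotProduct_add, smul_dotProduct, dotProduct_smul,
          smul_eq_mul, hc0q, hα1, hd00, hd01, hd10, hd11, hw0, hw1, hv0, hv1]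
        ring
      have hd0110 : d01 = d10 := by
        rw [hd01, hd10, hw1, hw0, ← symm_dot (Γ T) (hΓtr T) v0 v1, dotProduct_comm]
      have hα2eq : α2 = d10 + t*d11 := by
        rw [hα2, hw, hpq, hPsq t, mulVec_add, mulVec_smul, dotProduct_add, dotProduct_smul,
          smul_eq_mul, hd10, hd11, hw0, hw1]
      have hFd : HasDerivAt
          (fun s : ℝ => γ⁻¹*(c0q + s*α1 - (d00 + s*d01 + s*d10 + s*s*d11)))
          (γ⁻¹*(α1 - 2*α2)) t := by
        have hid : HasDerivAt (fun s : ℝ => s) 1 t := hasDerivAt_id t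
        have h1 : HasDerivAt (fun s : ℝ => c0q + s*α1) α1 t := by
          simpa using (hid.mul_const α1).const_add c0q
        have h2 : HasDerivAt (fun s : ℝ => d00 + s*d01 + s*d10 + s*s*d11)
            (d01 + d10 + 2*t*d11) t := by
          have h3 := (((hid.mul_const d01).const_add d00).add (hid.mul_const d10)).add
            ((hid.mul hid).mul_const d11)
          refine h3.congr_deriv ?_
          ring
        have h4 := (h1.sub h2).const_mul γ⁻¹
        refine h4.congr_deriv ?_
        rw [hα2eq, hd0110]
        ring
      -- time derivative of u
      have hlin : HasDerivAt (fun s : ℝ => Real.exp (r*(T-s)) * V) (E*(-r)*V) t := by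
        have h0 : HasDerivAt (fun s : ℝ => r*(T-s)) (-r) t := by
          simpa using ((hasDerivAt_id t).const_sub T).const_mul r
        have h1 := h0.exp.mul_const V
        convert h1 using 1
      have hθ : HasDerivAt
          (fun s : ℝ => -Real.exp (-γ*(Real.exp (r*(T-s))*V + a s
            + (1/2)*(γ⁻¹*(c0q + s*α1 - (d00 + s*d01 + s*d10 + s*s*d11))))))
          (-(Real.exp (-γ*(E*V + a t
            + (1/2)*(γ⁻¹*(c0q + t*α1 - (d00 + t*d01 + t*d10 + t*t*d11)))))
            * (-γ*(E*(-r)*V + (-((1/(2*γ)) * gt)) + (1/2)*(γ⁻¹*(α1 - 2*α2)))))) t := by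
        have h1 := ((((hlin.add haD).add (hFd.const_mul (1/2))).const_mul (-γ)).exp).neg
        exact h1
      have hKc2 : Real.exp (-γ*(E*V + a t
          + (1/2)*(γ⁻¹*(c0q + t*α1 - (d00 + t*d01 + t*d10 + t*t*d11))))) = Kc := by
        rw [hKc, hFs t htS]
      have heqv : (fun s => u s V β) =ᶠ[nhds t]
          (fun s : ℝ => -Real.exp (-γ*(Real.exp (r*(T-s))*V + a s
            + (1/2)*(γ⁻¹*(c0q + s*α1 - (d00 + s*d01 + s*d10 + s*s*d11)))))) := by
        filter_upwards [hSopen.mem_nhds htS] with s hs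
        rw [hu s V β, ← hq, hFs s hs]
      have humt : umt u t V β
          = -(Kc * (-γ*(E*(-r)*V + (-((1/(2*γ)) * gt)) + (1/2)*(γ⁻¹*(α1 - 2*α2))))) := by
        have hD := hθ.congr_of_eventuallyEq heqv
        rw [umt, hD.deriv, hKc2]
      -- trace term
      have hI4 : γ * Matrix.trace (Γ t * Sm⁻¹ * Γ t * (B t)) = gt := by
        have h1 : Γ t * Sm⁻¹ * Γ t * (γ • B t) = Γ t * Sm⁻¹ - Γ t * Sm⁻¹ * (Γ T * P t) := by
          rw [Matrix.mul_assoc (Γ t * Sm⁻¹) (Γ t) (γ • B t), Matrix.mul_smul, hΓBt,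
            Matrix.mul_sub, Matrix.mul_one]
        have h2 : γ * Matrix.trace (Γ t * Sm⁻¹ * Γ t * (B t))
            = Matrix.trace (Γ t * Sm⁻¹ * Γ t * (γ • B t)) := by
          rw [Matrix.mul_smul, Matrix.trace_smul, smul_eq_mul]
        rw [h2, h1, Matrix.trace_sub, Matrix.trace_mul_comm (Γ t * Sm⁻¹) (Γ T * P t),
          Matrix.trace_mul_comm (Γ t) Sm⁻¹, hgt, Matrix.mul_sub, Matrix.trace_sub]
        congr 1
        rw [Matrix.mul_assoc (Γ T) (P t) (Γ t * Sm⁻¹), ← Matrix.mul_assoc (P t) (Γ t) Sm⁻¹,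
          hPmulΓ t htS, Matrix.one_mul, Matrix.trace_mul_comm]
      have hI5 : γ^2*(bq ⬝ᵥ (Γ t * Sm⁻¹ * Γ t) *ᵥ bq) = α1 - 2*α2 + α3 := by
        have h1 : (Γ t * Sm⁻¹ * Γ t) *ᵥ bq = Γ t *ᵥ (Sm⁻¹ *ᵥ (Γ t *ᵥ bq)) := by
          rw [← Matrix.mulVec_mulVec bq (Γ t * Sm⁻¹) (Γ t),
            ← Matrix.mulVec_mulVec (Γ t *ᵥ bq) (Γ t) Sm⁻¹]
        rw [h1, ← symm_dot (Γ t) (hΓtr t) bq, hΓbq, smul_dotProduct, mulVec_smul,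
          dotProduct_smul, smul_eq_mul, smul_eq_mul]
        have h2 : (q - w) ⬝ᵥ Sm⁻¹ *ᵥ (q - w) = α1 - 2*α2 + α3 := by
          rw [sub_dotProduct, mulVec_sub, dotProduct_sub, dotProduct_sub, ← hv1, ← hmw]
          have h3 : q ⬝ᵥ mw = α2 := by
            rw [hmw, ← symm_dot Sm⁻¹ hSiT q w, ← hv1, hα2]
          have h4 : w ⬝ᵥ v1 = α2 := by rw [dotProduct_comm, hα2]
          rw [h3, h4, hα1, hα3]
          ring
        rw [h2, show γ^2 * (γ⁻¹ * (γ⁻¹ * (α1 - 2*α2 + α3))) = (γ*γ⁻¹)*((γ*γ⁻¹)*(α1 - 2*α2 + α3)) from by ring,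
          mul_inv_cancel₀ hγ0, one_mul, one_mul]
      have htrace : Matrix.trace (Γ t * Sm⁻¹ * Γ t * umhess u t V β)
          = Kc*(gt - (α1 - 2*α2 + α3)) := by
        rw [humhess, Matrix.mul_smul, Matrix.trace_smul, smul_eq_mul, Matrix.mul_sub,
          Matrix.trace_sub, Matrix.mul_smul, Matrix.trace_smul, Matrix.mul_smul,
          Matrix.trace_smul, trace_mul_vecMulVec, smul_eq_mul, smul_eq_mul]
        rw [← hI4, ← hI5]
      rw [humt, htrace, hamval Ms, hMsw, hMsSMs]
      field_simp
      ring
  · -- terminal condition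
    have haT : a T = 0 := by
      rw [ha T, intervalIntegral.integral_same, mul_zero]
    have hdetΓT : IsUnit (Γ T).det := by
      rw [hΓP T]
      exact isUnit_iff_ne_zero.2 ((hPpos T hT.le).inv.det_pos.ne')
    have hBT : B T = 0 := by
      rw [hB T, Matrix.mul_assoc]
      rw [show (Γ T)⁻¹ * (Γ T * (Γ T)⁻¹) = (Γ T)⁻¹ from by
        rw [mul_nonsing_inv _ hdetΓT, Matrix.mul_one]]
      rw [sub_self, smul_zero]
    rw [hu T V β, haT, hBT, sub_self, mul_zero, Real.exp_zero, one_mul]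
    norm_num

end
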